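/- Let K be a field and n ≥ 2 an integer. Let S ⊆ {1,…,n} × {1,…,n} be a set of positions such that every row index occurs in exactly two elements of S, every column index occurs in exactly two elements of S, and the graph G with vertex set S, in which two distinct positions are adjacent if and only if they have the same row index or the same column index, is connected (so G is a cycle of length 2n). Let Y be the n × n matrix over the polynomial ring K[x_p : p ∈ S] whose (i,j) entry is x_{(i,j)} if (i,j) ∈ S and 0 otherwise. Then for every integer k with 1 ≤ k < n, the ideal of k-minors of Y equals the ideal generated by the monomials ∏_{p ∈ A} x_p, where A ranges over the k-element subsets of S whose elements have pairwise distinct row indices and pairwise distinct column indices. -/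

import Mathlib

open MvPolynomial

private lemma walk_closed {V : Type*} {G : SimpleGraph V} {P : Set V}
    (hP : ∀ a b, G.Adj a b → a ∈ P → b ∈ P) :
    ∀ {v w : V}, G.Walk v w → v ∈ P → w ∈ P := by
  intro v w p
  induction p with
  | nil => exact id
  | cons hadj _ ih => exact fun hv => ih (hP _ _ hadj hv)

private lemma two_mem {α : Type*} [DecidableEq α] {t : Finset α} (ht : t.card = 2)
    {a b x : α} (ha : a ∈ t) (hb : b ∈ t) (hab : a ≠ b) (hx : x ∈ t) :
    x = a ∨ x = b := by
  have hsub : ({a, b} : Finset α) ⊆ t := by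
    intro y hy
    rcases Finset.mem_insert.mp hy with h | h
    · exact h ▸ ha
    · exact (Finset.mem_singleton.mp h) ▸ hb
  have hcard : ({a, b} : Finset α).card = 2 := Finset.card_pair hab
  have heq : ({a, b} : Finset α) = t :=
    Finset.eq_of_subset_of_card_le hsub (by omega)
  rw [← heq] at hx
  rcases Finset.mem_insert.mp hx with h | h
  · exact Or.inl h
  · exact Or.inr (Finset.mem_singleton.mp h)

private lemma cycle_unique_sdr {n k : ℕ} (hkn : k < n)
    (S : Finset (Fin n × Fin n))
    (hrow : ∀ i : Fin n, (S.filter fun p => p.1 = i).card = 2)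
    (hcol : ∀ j : Fin n, (S.filter fun p => p.2 = j).card = 2)
    (hconn : (SimpleGraph.fromRel
      (fun p q : {p : Fin n × Fin n // p ∈ S} =>
        (p : Fin n × Fin n).1 = (q : Fin n × Fin n).1 ∨
        (p : Fin n × Fin n).2 = (q : Fin n × Fin n).2)).Connected)
    {r c : Fin k → Fin n} (hr : Function.Injective r) (hc : Function.Injective c)
    {σ : Equiv.Perm (Fin k)} (hσ : σ ≠ 1)
    (hA : ∀ i, (r i, c i) ∈ S) :
    ∃ i, (r i, c (σ i)) ∉ S := by
  by_contra hB
  push_neg at hB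
  set G := (SimpleGraph.fromRel
      (fun p q : {p : Fin n × Fin n // p ∈ S} =>
        (p : Fin n × Fin n).1 = (q : Fin n × Fin n).1 ∨
        (p : Fin n × Fin n).2 = (q : Fin n × Fin n).2)) with hG
  set P : Set {p : Fin n × Fin n // p ∈ S} :=
    {x | ∃ i, σ i ≠ i ∧ ((x : Fin n × Fin n) = (r i, c i) ∨
      (x : Fin n × Fin n) = (r i, c (σ i)))} with hP
  obtain ⟨i0, hi0⟩ : ∃ i, σ i ≠ i := by
    by_contra h
    push_neg at h
    exact hσ (Equiv.ext h)
  -- closure of P under adjacency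
  have hclosed : ∀ a b, G.Adj a b → a ∈ P → b ∈ P := by
    rintro a b hab ⟨i, hi, hcase⟩
    rw [hG, SimpleGraph.fromRel_adj] at hab
    obtain ⟨hne, hrel⟩ := hab
    have hshare : (a : Fin n × Fin n).1 = (b : Fin n × Fin n).1 ∨
        (a : Fin n × Fin n).2 = (b : Fin n × Fin n).2 := by
      rcases hrel with h | h
      · exact h
      · rcases h with h | h
        · exact Or.inl h.symm
        · exact Or.inr h.symm
    have hbS := b.2
    rcases hcase with hpa | hqa
    · rcases hshare with hsh | hsh
      · -- a = (r i, c i), b in the same row r i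
        have hb1 : (b : Fin n × Fin n) ∈ S.filter fun p => p.1 = r i :=
          Finset.mem_filter.mpr ⟨hbS, by rw [← hsh, hpa]⟩
        have h1 : ((r i, c i) : Fin n × Fin n) ∈ S.filter fun p => p.1 = r i :=
          Finset.mem_filter.mpr ⟨hA i, rfl⟩
        have h2 : ((r i, c (σ i)) : Fin n × Fin n) ∈ S.filter fun p => p.1 = r i :=
          Finset.mem_filter.mpr ⟨hB i, rfl⟩
        have hd : ((r i, c i) : Fin n × Fin n) ≠ (r i, c (σ i)) := by
          intro h
          exact hi (hc (Prod.ext_iff.mp h).2).symm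
        rcases two_mem (hrow (r i)) h1 h2 hd hb1 with h | h
        · exact absurd (Subtype.ext (h.trans hpa.symm)) (Ne.symm hne)
        · exact ⟨i, hi, Or.inr h⟩
      · -- a = (r i, c i), b in the same column c i
        set j := σ.symm i with hj
        have hji : σ j = i := σ.apply_symm_apply i
        have hjne : j ≠ i := by
          intro h
          rw [h] at hji
          exact hi hji
        have hjfix : σ j ≠ j := by rw [hji]; exact Ne.symm hjne
        have hb1 : (b : Fin n × Fin n) ∈ S.filter fun p => p.2 = c i :=
          Finset.mem_filter.mpr ⟨hbS, by rw [← hsh, hpa]⟩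
        have h1 : ((r i, c i) : Fin n × Fin n) ∈ S.filter fun p => p.2 = c i :=
          Finset.mem_filter.mpr ⟨hA i, rfl⟩
        have h2 : ((r j, c (σ j)) : Fin n × Fin n) ∈ S.filter fun p => p.2 = c i :=
          Finset.mem_filter.mpr ⟨hB j, by simp [hji]⟩
        have hd : ((r i, c i) : Fin n × Fin n) ≠ (r j, c (σ j)) := by
          intro h
          exact hjne (hr (Prod.ext_iff.mp h).1).symm
        rcases two_mem (hcol (c i)) h1 h2 hd hb1 with h | h
        · exact absurd (Subtype.ext (h.trans hpa.symm)) (Ne.symm hne)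
        · exact ⟨j, hjfix, Or.inr h⟩
    · rcases hshare with hsh | hsh
      · -- a = (r i, c (σ i)), b in the same row r i
        have hb1 : (b : Fin n × Fin n) ∈ S.filter fun p => p.1 = r i :=
          Finset.mem_filter.mpr ⟨hbS, by rw [← hsh, hqa]⟩
        have h1 : ((r i, c i) : Fin n × Fin n) ∈ S.filter fun p => p.1 = r i :=
          Finset.mem_filter.mpr ⟨hA i, rfl⟩
        have h2 : ((r i, c (σ i)) : Fin n × Fin n) ∈ S.filter fun p => p.1 = r i :=
          Finset.mem_filter.mpr ⟨hB i, rfl⟩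
        have hd : ((r i, c i) : Fin n × Fin n) ≠ (r i, c (σ i)) := by
          intro h
          exact hi (hc (Prod.ext_iff.mp h).2).symm
        rcases two_mem (hrow (r i)) h1 h2 hd hb1 with h | h
        · exact ⟨i, hi, Or.inl h⟩
        · exact absurd (Subtype.ext (h.trans hqa.symm)) (Ne.symm hne)
      · -- a = (r i, c (σ i)), b in the same column c (σ i)
        have hσσ : σ (σ i) ≠ σ i := fun h => hi (σ.injective h)
        have hb1 : (b : Fin n × Fin n) ∈ S.filter fun p => p.2 = c (σ i) :=
          Finset.mem_filter.mpr ⟨hbS, by rw [← hsh, hqa]⟩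
        have h1 : ((r i, c (σ i)) : Fin n × Fin n) ∈ S.filter fun p => p.2 = c (σ i) :=
          Finset.mem_filter.mpr ⟨hB i, rfl⟩
        have h2 : ((r (σ i), c (σ i)) : Fin n × Fin n) ∈ S.filter fun p => p.2 = c (σ i) :=
          Finset.mem_filter.mpr ⟨hA (σ i), rfl⟩
        have hd : ((r i, c (σ i)) : Fin n × Fin n) ≠ (r (σ i), c (σ i)) := by
          intro h
          exact hi (hr (Prod.ext_iff.mp h).1).symm
        rcases two_mem (hcol (c (σ i))) h1 h2 hd hb1 with h | h
        · exact absurd (Subtype.ext (h.trans hqa.symm)) (Ne.symm hne)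
        · exact ⟨σ i, hσσ, Or.inl h⟩
  -- a row not in the range of r, and an element of S in that row
  obtain ⟨i1, hi1⟩ : ∃ i1 : Fin n, ∀ j, r j ≠ i1 := by
    by_contra h
    push_neg at h
    have hsurj : Function.Surjective r := fun i => h i
    have := Fintype.card_le_of_surjective r hsurj
    simp only [Fintype.card_fin] at this
    omega
  obtain ⟨w, hw⟩ : (S.filter fun p => p.1 = i1).Nonempty := by
    rw [← Finset.card_pos, hrow i1]; norm_num
  obtain ⟨hwS, hw1⟩ := Finset.mem_filter.mp hw
  have hwP : (⟨w, hwS⟩ : {p : Fin n × Fin n // p ∈ S}) ∉ P := by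
    rintro ⟨i, hi, h | h⟩
    · exact hi1 i (by rw [← hw1]; exact congrArg Prod.fst h.symm)
    · exact hi1 i (by rw [← hw1]; exact congrArg Prod.fst h.symm)
  have hstart : (⟨(r i0, c i0), hA i0⟩ : {p : Fin n × Fin n // p ∈ S}) ∈ P :=
    ⟨i0, hi0, Or.inl rfl⟩
  obtain ⟨p⟩ := hconn.preconnected ⟨(r i0, c i0), hA i0⟩ ⟨w, hwS⟩
  exact hwP (walk_closed hclosed p hstart)

/-- Let `S` be a set of positions in an `n × n` grid such that every row
index and every column index occurs in exactly two elements of `S`, and such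
that the graph on `S` in which two distinct positions are adjacent iff they
share a row or a column is connected. Let `Y` be the matrix over
`K[x_p : p ∈ S]` whose entry at a position in `S` is the corresponding
variable and whose other entries are `0`. Then for `1 ≤ k < n` the ideal of
`k`-minors of `Y` is generated by the monomials `∏_{p ∈ A} x_p`, where `A`
ranges over the `k`-element subsets of `S` whose elements lie in pairwise
distinct rows and pairwise distinct columns. -/
theorem minors_of_cycle_matrix (K : Type*) [Field K] (n : ℕ) (hn : 2 ≤ n)
    (S : Finset (Fin n × Fin n))
    (hrow : ∀ i : Fin n, (S.filter fun p => p.1 = i).card = 2)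
    (hcol : ∀ j : Fin n, (S.filter fun p => p.2 = j).card = 2)
    (hconn : (SimpleGraph.fromRel
      (fun p q : {p : Fin n × Fin n // p ∈ S} =>
        (p : Fin n × Fin n).1 = (q : Fin n × Fin n).1 ∨
        (p : Fin n × Fin n).2 = (q : Fin n × Fin n).2)).Connected)
    (Y : Matrix (Fin n) (Fin n) (MvPolynomial {p : Fin n × Fin n // p ∈ S} K))
    (hY : ∀ i j, Y i j =
      if h : (i, j) ∈ S then X (⟨(i, j), h⟩ : {p : Fin n × Fin n // p ∈ S})
      else 0)
    (k : ℕ) (hk1 : 1 ≤ k) (hkn : k < n) :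
    Ideal.span {f : MvPolynomial {p : Fin n × Fin n // p ∈ S} K |
        ∃ r c : Fin k → Fin n,
          Function.Injective r ∧ Function.Injective c ∧
          f = (Y.submatrix r c).det}
      = Ideal.span {g : MvPolynomial {p : Fin n × Fin n // p ∈ S} K |
          ∃ A : Finset {p : Fin n × Fin n // p ∈ S}, A.card = k ∧
            (∀ p ∈ A, ∀ q ∈ A, p ≠ q →
              (p : Fin n × Fin n).1 ≠ (q : Fin n × Fin n).1 ∧
              (p : Fin n × Fin n).2 ≠ (q : Fin n × Fin n).2) ∧
            g = ∏ p ∈ A, X p} := by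
  apply le_antisymm
  · -- every minor lies in the monomial ideal
    rw [Ideal.span_le]
    rintro f ⟨r, c, hr, hc, rfl⟩
    rw [SetLike.mem_coe, Matrix.det_apply]
    refine Ideal.sum_mem _ fun σ _ => ?_
    by_cases hall : ∀ i, (r (σ i), c i) ∈ S
    · set g : Fin k → {p : Fin n × Fin n // p ∈ S} :=
        fun i => ⟨(r (σ i), c i), hall i⟩ with hg
      have hginj : Function.Injective g := by
        intro i j h
        have := (Prod.ext_iff.mp (Subtype.ext_iff.mp h)).2
        exact hc this
      set A : Finset {p : Fin n × Fin n // p ∈ S} :=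
        Finset.image g Finset.univ with hA
      have hprod : ∏ i, (Y.submatrix r c) (σ i) i = ∏ p ∈ A, X p := by
        rw [hA, Finset.prod_image (fun i _ j _ h => hginj h)]
        refine Finset.prod_congr rfl fun i _ => ?_
        simp only [Matrix.submatrix_apply, hY, hg, dif_pos (hall i)]
      rw [hprod, Units.smul_def, zsmul_eq_mul]
      refine Ideal.mul_mem_left _ _ (Ideal.subset_span ?_)
      refine ⟨A, ?_, ?_, rfl⟩
      · rw [hA, Finset.card_image_of_injective _ hginj, Finset.card_univ,
          Fintype.card_fin]
      · rintro p hp q hq hpq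
        rw [hA, Finset.mem_image] at hp hq
        obtain ⟨i, _, rfl⟩ := hp
        obtain ⟨j, _, rfl⟩ := hq
        have hij : i ≠ j := fun h => hpq (by rw [h])
        exact ⟨fun h => hij (σ.injective (hr h)), fun h => hij (hc h)⟩
    · push_neg at hall
      obtain ⟨i, hi⟩ := hall
      have : (Y.submatrix r c) (σ i) i = 0 := by
        simp only [Matrix.submatrix_apply, hY, dif_neg hi]
      have hz : ∏ i : Fin k, (Y.submatrix r c) (σ i) i = 0 :=
        Finset.prod_eq_zero (f := fun i => (Y.submatrix r c) (σ i) i)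
          (Finset.mem_univ i) this
      rw [hz, smul_zero]
      exact Ideal.zero_mem _
  · -- every monomial generator is a minor
    rw [Ideal.span_le]
    rintro g ⟨A, hcard, hind, rfl⟩
    set e : Fin k ≃ A := (Finset.equivFinOfCardEq hcard).symm with he
    set r : Fin k → Fin n := fun i => ((e i : {p : Fin n × Fin n // p ∈ S})
      : Fin n × Fin n).1 with hrdef
    set c : Fin k → Fin n := fun i => ((e i : {p : Fin n × Fin n // p ∈ S})
      : Fin n × Fin n).2 with hcdef
    have hene : ∀ {i j : Fin k}, i ≠ j →
        (e i : {p : Fin n × Fin n // p ∈ S}) ≠ (e j : {p : Fin n × Fin n // p ∈ S}) := by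
      intro i j hij h
      exact hij (e.injective (Subtype.ext h))
    have hr : Function.Injective r := by
      intro i j h
      by_contra hij
      exact (hind _ (e i).2 _ (e j).2 (hene hij)).1 h
    have hc : Function.Injective c := by
      intro i j h
      by_contra hij
      exact (hind _ (e i).2 _ (e j).2 (hene hij)).2 h
    have hdiagEq : ∀ i, ((r i, c i) : Fin n × Fin n) =
        ((e i : {p : Fin n × Fin n // p ∈ S}) : Fin n × Fin n) := fun i => rfl
    have hdiag : ∀ i, (r i, c i) ∈ S := fun i => by
      rw [hdiagEq i]; exact (e i : {p : Fin n × Fin n // p ∈ S}).2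
    have hdet : (Y.submatrix r c).det = ∏ p ∈ A, X p := by
      rw [Matrix.det_apply]
      have hzero : ∀ σ ∈ (Finset.univ : Finset (Equiv.Perm (Fin k))), σ ≠ 1 →
          Equiv.Perm.sign σ • ∏ i, (Y.submatrix r c) (σ i) i = 0 := by
        intro σ _ hσ
        obtain ⟨i, hi⟩ := cycle_unique_sdr hkn S hrow hcol hconn hr hc
          (inv_ne_one.mpr hσ) hdiag
        have hz0 : (Y.submatrix r c) (σ (σ⁻¹ i)) (σ⁻¹ i) = 0 := by
          rw [show σ (σ⁻¹ i) = i from σ.apply_symm_apply i]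
          simp only [Matrix.submatrix_apply, hY, dif_neg hi]
        have hz : ∏ i : Fin k, (Y.submatrix r c) (σ i) i = 0 :=
          Finset.prod_eq_zero (f := fun i => (Y.submatrix r c) (σ i) i)
            (Finset.mem_univ (σ⁻¹ i)) hz0
        rw [hz, smul_zero]
      rw [Finset.sum_eq_single (1 : Equiv.Perm (Fin k)) hzero
        (fun h => absurd (Finset.mem_univ _) h)]
      · rw [Equiv.Perm.sign_one, one_smul]
        have : ∀ i : Fin k, (Y.submatrix r c) ((1 : Equiv.Perm (Fin k)) i) i =
            X (e i : {p : Fin n × Fin n // p ∈ S}) := by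
          intro i
          simp only [Equiv.Perm.one_apply, Matrix.submatrix_apply, hY,
            dif_pos (hdiag i)]
          rfl
        rw [Finset.prod_congr rfl fun i _ => this i]
        rw [← Finset.prod_coe_sort A (fun p => (X p : MvPolynomial _ K))]
        exact Equiv.prod_comp e fun a : A => X (a : {p : Fin n × Fin n // p ∈ S})
    rw [SetLike.mem_coe, ← hdet]
    exact Ideal.subset_span ⟨r, c, hr, hc, rfl⟩
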